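/- arXiv:2402.12874 — 7 statements merged into one kernel-verified Lean document; each statement's English description precedes it below -/
import Mathlib

section
/- Policy improvement lemma: for any two policies μ and π on a finite MDP, V^μ(s) = V^π(s) + E_μ[∑_{t=0}^∞ γ^t A^π(s_t, a_t) | s_0 = s] for every state s. -/
/-- Policy improvement lemma: V^μ(s) = V^π(s) + E_μ[∑ γ^t A^π(s_t,a_t) | s_0 = s].
The expected discounted sum of advantages W under μ is characterized as the
(unique, since γ ∈ [0,1)) fixed point of the Bellman operator of μ with reward A^π. -/
theorem policy_improvement_lemma {S A : Type*} [Fintype S] [Fintype A]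
    (p : S → A → S → ℝ) (r : S → A → ℝ) (γ : ℝ) (hγ0 : 0 ≤ γ) (hγ1 : γ < 1)
    (μ π : S → A → ℝ)
    (hp0 : ∀ s a s', 0 ≤ p s a s') (hp1 : ∀ s a, ∑ s', p s a s' = 1)
    (hμ0 : ∀ s a, 0 ≤ μ s a) (hμ1 : ∀ s, ∑ a, μ s a = 1)
    (hπ0 : ∀ s a, 0 ≤ π s a) (hπ1 : ∀ s, ∑ a, π s a = 1)
    (Vμ Vπ : S → ℝ) (Adv : S → A → ℝ) (W : S → ℝ)
    (hVμ : ∀ s, Vμ s = ∑ a, μ s a * (r s a + γ * ∑ s', p s a s' * Vμ s'))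
    (hVπ : ∀ s, Vπ s = ∑ a, π s a * (r s a + γ * ∑ s', p s a s' * Vπ s'))
    (hA : ∀ s a, Adv s a = r s a + γ * (∑ s', p s a s' * Vπ s') - Vπ s)
    (hW : ∀ s, W s = ∑ a, μ s a * (Adv s a + γ * ∑ s', p s a s' * W s')) :
    ∀ s, Vμ s = Vπ s + W s := by
  set g : S → ℝ := fun s => Vμ s - (Vπ s + W s) with hg
  -- Bellman-type equation for Vπ + W
  have hVW : ∀ s, Vπ s + W s
      = ∑ a, μ s a * (r s a + γ * ∑ s', p s a s' * (Vπ s' + W s')) := by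
    intro s
    have hVπs : Vπ s = ∑ a, μ s a * Vπ s := by
      rw [← Finset.sum_mul, hμ1, one_mul]
    calc Vπ s + W s
        = (∑ a, μ s a * Vπ s)
          + ∑ a, μ s a * (Adv s a + γ * ∑ s', p s a s' * W s') := by
          rw [← hVπs, ← hW]
      _ = ∑ a, (μ s a * Vπ s
          + μ s a * (Adv s a + γ * ∑ s', p s a s' * W s')) :=
          (Finset.sum_add_distrib).symm
      _ = ∑ a, μ s a * (r s a + γ * ∑ s', p s a s' * (Vπ s' + W s')) := by
          apply Finset.sum_congr rfl
          intro a _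
          rw [hA]
          have h : ∑ s', p s a s' * (Vπ s' + W s')
              = (∑ s', p s a s' * Vπ s') + ∑ s', p s a s' * W s' := by
            rw [← Finset.sum_add_distrib]
            exact Finset.sum_congr rfl fun s' _ => mul_add _ _ _
          rw [h]; ring
  -- fixed point equation for g
  have key : ∀ s, g s = γ * ∑ a, μ s a * ∑ s', p s a s' * g s' := by
    intro s
    have : g s = Vμ s - (Vπ s + W s) := rfl
    rw [this, hVμ s, hVW s, ← Finset.sum_sub_distrib, Finset.mul_sum]
    apply Finset.sum_congr rfl
    intro a _
    have h : ∑ s', p s a s' * g s'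
        = (∑ s', p s a s' * Vμ s') - ∑ s', p s a s' * (Vπ s' + W s') := by
      rw [← Finset.sum_sub_distrib]
      exact Finset.sum_congr rfl fun s' _ => (mul_sub _ _ _)
    rw [h]; ring
  intro s
  have : Nonempty S := ⟨s⟩
  set M : ℝ := Finset.univ.sup' Finset.univ_nonempty (fun t => |g t|) with hM
  have hle : ∀ t, |g t| ≤ M := fun t => Finset.le_sup' (fun t => |g t|) (Finset.mem_univ t)
  have hM0 : 0 ≤ M := le_trans (abs_nonneg (g s)) (hle s)
  have bound : ∀ t, |g t| ≤ γ * M := by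
    intro t
    rw [key t, abs_mul, abs_of_nonneg hγ0]
    apply mul_le_mul_of_nonneg_left _ hγ0
    calc |∑ a, μ t a * ∑ s', p t a s' * g s'|
        ≤ ∑ a, |μ t a * ∑ s', p t a s' * g s'| := Finset.abs_sum_le_sum_abs _ _
      _ ≤ ∑ a, μ t a * M := by
          apply Finset.sum_le_sum
          intro a _
          rw [abs_mul, abs_of_nonneg (hμ0 t a)]
          apply mul_le_mul_of_nonneg_left _ (hμ0 t a)
          calc |∑ s', p t a s' * g s'|
              ≤ ∑ s', |p t a s' * g s'| := Finset.abs_sum_le_sum_abs _ _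
            _ ≤ ∑ s', p t a s' * M := by
                apply Finset.sum_le_sum
                intro s' _
                rw [abs_mul, abs_of_nonneg (hp0 t a s')]
                exact mul_le_mul_of_nonneg_left (hle s') (hp0 t a s')
            _ = M := by rw [← Finset.sum_mul, hp1, one_mul]
      _ = M := by rw [← Finset.sum_mul, hμ1, one_mul]
  have hMle : M ≤ γ * M := by
    obtain ⟨t, _, ht⟩ := Finset.exists_mem_eq_sup' Finset.univ_nonempty
      (fun t => |g t|)
    calc M = |g t| := by rw [hM, ht]
      _ ≤ γ * M := bound t
  have hMzero : M = 0 := by nlinarith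
  have : |g s| ≤ 0 := hMzero ▸ hle s
  have hgs : g s = 0 := abs_nonpos_iff.mp this
  have := hgs
  simp only [hg] at this
  linarith
end

section
/- Zero loss at the true solution: for any behavior policy μ, target policy π, and backup length n, the Off-policy DAE objective L(Â,B̂,V̂) = E_μ[(∑_{t=0}^n γ^t (r_t − Â_t − γ B̂_t) + γ^{n+1} V̂(s_{n+1}) − V̂(s_0))²] evaluated at (A^π, B^π, V^π) equals 0, and (A^π, B^π, V^π) satisfy the constraints ∑_a π(a|s) Â(s,a)=0 and ∑_{s'} p(s'|s,a) B̂(s,a,s')=0. -/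
/-- Zero loss at the true solution: the Off-policy DAE residual vanishes on every
trajectory (hence the loss under any behavior policy μ is zero), and
(A^π, B^π, V^π) satisfy the constraints. -/
theorem offpolicy_dae_zero_loss {S A : Type*} [Fintype S] [Fintype A]
    (p : S → A → S → ℝ) (r : S → A → ℝ) (γ : ℝ) (π : S → A → ℝ)
    (hπ : ∀ s, ∑ a, π s a = 1) (hp : ∀ s a, ∑ s', p s a s' = 1)
    (V : S → ℝ) (Adv : S → A → ℝ) (B : S → A → S → ℝ)
    (hV : ∀ s, V s = ∑ a, π s a * (r s a + γ * ∑ s', p s a s' * V s'))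
    (hA : ∀ s a, Adv s a = r s a + γ * (∑ s', p s a s' * V s') - V s)
    (hB : ∀ s a s', B s a s' = V s' - ∑ s'', p s a s'' * V s'')
    (n : ℕ) :
    (∀ (s : ℕ → S) (a : ℕ → A),
        (∑ t ∈ Finset.range (n + 1),
            γ ^ t * (r (s t) (a t) - Adv (s t) (a t) - γ * B (s t) (a t) (s (t + 1))))
          + γ ^ (n + 1) * V (s (n + 1)) - V (s 0) = 0) ∧
    (∀ s, ∑ a, π s a * Adv s a = 0) ∧
    (∀ s a, ∑ s', p s a s' * B s a s' = 0) := by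
  refine ⟨fun s a => ?_, fun s => ?_, fun s a => ?_⟩
  · have key : ∀ t, γ ^ t * (r (s t) (a t) - Adv (s t) (a t)
        - γ * B (s t) (a t) (s (t + 1)))
        = γ ^ t * V (s t) - γ ^ (t + 1) * V (s (t + 1)) := by
      intro t
      rw [hA, hB]; ring
    rw [Finset.sum_congr rfl (fun t _ => key t), Finset.sum_range_sub' (fun t => γ ^ t * V (s t))]
    simp
  · have : ∑ a, π s a * Adv s a
        = (∑ a, π s a * (r s a + γ * ∑ s', p s a s' * V s')) - (∑ a, π s a) * V s := by
      rw [Finset.sum_mul, ← Finset.sum_sub_distrib]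
      exact Finset.sum_congr rfl fun a _ => by rw [hA]; ring
    rw [this, ← hV, hπ, one_mul, sub_self]
  · have : ∑ s', p s a s' * B s a s'
        = (∑ s', p s a s' * V s') - (∑ s', p s a s') * (∑ s'', p s a s'' * V s'') := by
      rw [Finset.sum_mul, ← Finset.sum_sub_distrib]
      exact Finset.sum_congr rfl fun s' _ => by rw [hB]; ring
    rw [this, hp, one_mul, sub_self]
end

section
/- Counterexample solution: in the two-state MDP where state 1 transitions with probability 1/2 each to state 2 or to termination (reward 0), and state 2 has actions u (reward 1) and d (reward 0) both terminal, the minimizer of the uncorrected DAE loss L(Â,V̂) = (1/2)μ(u|2)(1−Â(2,u)−V̂(1))² + (1/2)μ(d|2)(0−Â(2,d)−V̂(1))² + (1/2)(0−V̂(1))² subject to ∑_a π(a|2)Â(2,a)=0 satisfies V*(1) = π(u|2) / (1 + π(u|2)²/μ(u|2) + π(d|2)²/μ(d|2)). -/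
/-- If `0 ≤ g*t + c*t^2` for all `t` with `c ≥ 0`, then `g = 0`. -/
lemma grad_zero (g c : ℝ) (hc : 0 ≤ c) (h : ∀ t : ℝ, 0 ≤ g * t + c * t ^ 2) :
    g = 0 := by
  have hc1 : (0:ℝ) < c + 1 := by linarith
  have h1 := h (-(g / (c + 1)))
  have e : g * (-(g / (c + 1))) + c * (-(g / (c + 1))) ^ 2
      = -g ^ 2 / (c + 1) ^ 2 := by field_simp; ring
  rw [e] at h1
  have h2 : -g ^ 2 / (c + 1) ^ 2 * (c + 1) ^ 2 = -g ^ 2 := by field_simp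
  have hsq : g ^ 2 ≤ 0 := by nlinarith [mul_nonneg h1 (sq_nonneg (c + 1))]
  have : g ^ 2 = 0 := le_antisymm hsq (sq_nonneg g)
  exact pow_eq_zero_iff (two_ne_zero) |>.mp this

/-- Counterexample: the constrained minimizer of the uncorrected DAE loss in the
two-state MDP satisfies V*(1) = π(u)/(1 + π(u)²/μ(u) + π(d)²/μ(d)). -/
theorem uncorrected_dae_counterexample (μu μd πu πd : ℝ)
    (hμu : 0 < μu) (hμd : 0 < μd) (hμ : μu + μd = 1)
    (hπu : 0 ≤ πu) (hπd : 0 ≤ πd) (hπ : πu + πd = 1)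
    (V Au Ad : ℝ)
    (hconstr : πu * Au + πd * Ad = 0)
    (hmin : ∀ V' Au' Ad' : ℝ, πu * Au' + πd * Ad' = 0 →
      (1/2) * μu * (1 - Au - V) ^ 2 + (1/2) * μd * (0 - Ad - V) ^ 2
          + (1/2) * (0 - V) ^ 2
        ≤ (1/2) * μu * (1 - Au' - V') ^ 2 + (1/2) * μd * (0 - Ad' - V') ^ 2
          + (1/2) * (0 - V') ^ 2) :
    V = πu / (1 + πu ^ 2 / μu + πd ^ 2 / μd) := by
  have hg1 : -(μu * (1 - Au - V)) + μd * (Ad + V) + V = 0 := by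
    apply grad_zero _ ((1/2) * μu + (1/2) * μd + 1/2) (by positivity)
    intro t
    have := hmin (V + t) Au Ad hconstr
    nlinarith [this]
  have hg2 : -(πd * (μu * (1 - Au - V))) - πu * (μd * (Ad + V)) = 0 := by
    apply grad_zero _ ((1/2) * μu * πd ^ 2 + (1/2) * μd * πu ^ 2) (by positivity)
    intro t
    have := hmin V (Au + t * πd) (Ad - t * πu) (by linear_combination hconstr)
    nlinarith [this]
  have hE1 : μu * (1 - Au - V) = πu * V := by
    linear_combination (-πu) * hg1 - hg2 + (-(μu * (1 - Au - V))) * hπ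
  have hE2 : μd * (Ad + V) = -(πd * V) := by
    linear_combination πd * hg1 - hg2 + (-(μd * (Ad + V))) * hπ
  have hD : (0:ℝ) < 1 + πu ^ 2 / μu + πd ^ 2 / μd := by positivity
  have hkey : V * (μu * μd + πu ^ 2 * μd + πd ^ 2 * μu) = πu * μu * μd := by
    linear_combination (-(μu * μd)) * hconstr + (-(πu * μd)) * hE1
      + (πd * μu) * hE2 + (-(μu * μd * V)) * hπ
  rw [eq_div_iff (ne_of_gt hD)]
  field_simp
  linear_combination hkey
end

section
/- In the counterexample MDP, if μ = π then the constrained minimizer of the uncorrected DAE loss coincides with the true values: V*(1) = π(u|2)/2 = V^π(1), A*(2,u) = A^π(2,u), A*(2,d) = A^π(2,d). -/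
/-- In the counterexample MDP, if μ = π (on-policy) then the constrained
minimizer of the uncorrected DAE loss equals the true values
V^π(1) = π(u)/2, A^π(2,u) = 1 − π(u), A^π(2,d) = −π(u). -/
theorem uncorrected_dae_onpolicy_exact (πu πd : ℝ)
    (hπu : 0 < πu) (hπd : 0 < πd) (hπ : πu + πd = 1)
    (V Au Ad : ℝ)
    (hconstr : πu * Au + πd * Ad = 0)
    (hmin : ∀ V' Au' Ad' : ℝ, πu * Au' + πd * Ad' = 0 →
      (1/2) * πu * (1 - Au - V) ^ 2 + (1/2) * πd * (0 - Ad - V) ^ 2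
          + (1/2) * V ^ 2
        ≤ (1/2) * πu * (1 - Au' - V') ^ 2 + (1/2) * πd * (0 - Ad' - V') ^ 2
          + (1/2) * V' ^ 2) :
    V = πu / 2 ∧ Au = 1 - πu ∧ Ad = -πu := by
  have hpd : πd = 1 - πu := by linarith
  subst hpd
  have hkey := hmin (πu/2) (1-πu) (-πu) (by ring)
  have hid : (1/2) * πu * (1 - Au - V) ^ 2 + (1/2) * (1-πu) * (0 - Ad - V) ^ 2
      + (1/2) * V ^ 2
      = πu^2/4 + (V - πu/2)^2 + (1/2)*πu*(1-πu)*(1-Au+Ad)^2 := by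
    linear_combination ((1/2)*(πu*Au+(1-πu)*Ad) - πu + V) * hconstr
  have hrhs : (1/2) * πu * (1 - (1-πu) - πu/2) ^ 2
      + (1/2) * (1-πu) * (0 - -πu - πu/2) ^ 2 + (1/2) * (πu/2) ^ 2 = πu^2/4 := by
    ring
  rw [hid, hrhs] at hkey
  have h1 : (V - πu/2)^2 ≥ 0 := sq_nonneg _
  have h2 : (1/2)*πu*(1-πu)*(1-Au+Ad)^2 ≥ 0 := by positivity
  have hV : V = πu/2 := by nlinarith [sq_nonneg (V - πu/2)]
  have hp : 0 < πu * (1 - πu) := mul_pos hπu hπd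
  have h3 : πu * (1-πu) * (1-Au+Ad)^2 = 0 := by
    nlinarith [mul_nonneg hp.le (sq_nonneg (1-Au+Ad))]
  have hab : (1-Au+Ad)^2 = 0 := by
    rcases mul_eq_zero.mp h3 with h | h
    · exact absurd h hp.ne'
    · exact h
  have hab' : 1 - Au + Ad = 0 := by
    have := sq_eq_zero_iff.mp hab; linarith
  have hAu : Au = 1 - πu := by linear_combination hconstr - (1-πu) * hab'
  exact ⟨hV, hAu, by linarith⟩
end

section
/- In the counterexample MDP, if μ ≠ π (both with full support on {u,d}), then V*(1) ≠ V^π(1), i.e., uncorrected DAE is biased: π(u|2)/(1 + π(u|2)²/μ(u|2) + π(d|2)²/μ(d|2)) ≠ π(u|2)/2 whenever π(u|2) ∈ (0,1) and μ ≠ π. -/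
/-- In the counterexample MDP, if μ ≠ π then the uncorrected DAE estimate is
biased: V*(1) ≠ V^π(1) = π(u)/2. -/
theorem uncorrected_dae_biased (μu μd πu πd : ℝ)
    (hμu : 0 < μu) (hμd : 0 < μd) (hμ : μu + μd = 1)
    (hπu : 0 < πu) (hπu1 : πu < 1) (hπ : πu + πd = 1)
    (hne : (μu, μd) ≠ (πu, πd)) :
    πu / (1 + πu ^ 2 / μu + πd ^ 2 / μd) ≠ πu / 2 := by
  have hmu : μu ≠ πu := by
    intro h
    apply hne
    have : μd = πd := by linarith
    simp [h, this]
  have key : πu ^ 2 / μu + πd ^ 2 / μd > 1 := by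
    rw [gt_iff_lt, div_add_div _ _ (ne_of_gt hμu) (ne_of_gt hμd),
      lt_div_iff₀ (by positivity)]
    have h1 : πd = 1 - πu := by linarith
    have h2 : μd = 1 - μu := by linarith
    have h3 : (0:ℝ) < (πu - μu) ^ 2 := by
      have := sub_ne_zero.mpr (Ne.symm hmu)
      positivity
    subst h1 h2
    nlinarith [h3]
  have hd : (2:ℝ) < 1 + πu ^ 2 / μu + πd ^ 2 / μd := by linarith
  intro h
  have := (div_eq_div_iff (by linarith) (by norm_num)).mp h
  nlinarith
end

section
/- In the exact finite MDP setting, conditional variance of the 1-step return decomposes: Var(r(s,a_0) + γ V^π(s_1) | s_0=s) = Var_a(A^π(s,a)) + γ² E_a[Var_{s'}(B^π(s,a,s'))], where a ∼ π(·|s) and s' ∼ p(·|s,a); i.e., the variance of the bootstrapped return splits into a skill part and a luck part. -/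
/-- Variance decomposition of the bootstrapped 1-step return into a skill part
(variance of A^π over actions) and a luck part (expected variance of B^π over
next states). By the Bellman equation the conditional mean of r(s,a) + γ V^π(s')
is V^π(s), and A^π, B^π are centered, so the sums below are the variances. -/
theorem skill_luck_variance_decomposition {S A : Type*} [Fintype S] [Fintype A]
    (p : S → A → S → ℝ) (r : S → A → ℝ) (γ : ℝ) (π : S → A → ℝ)
    (hπ : ∀ s, ∑ a, π s a = 1) (hp : ∀ s a, ∑ s', p s a s' = 1)
    (V : S → ℝ) (Adv : S → A → ℝ) (B : S → A → S → ℝ)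
    (hV : ∀ s, V s = ∑ a, π s a * (r s a + γ * ∑ s', p s a s' * V s'))
    (hA : ∀ s a, Adv s a = r s a + γ * (∑ s', p s a s' * V s') - V s)
    (hB : ∀ s a s', B s a s' = V s' - ∑ s'', p s a s'' * V s'') :
    ∀ s, ∑ a, π s a * ∑ s', p s a s' * (r s a + γ * V s' - V s) ^ 2
      = (∑ a, π s a * (Adv s a) ^ 2)
        + γ ^ 2 * ∑ a, π s a * ∑ s', p s a s' * (B s a s') ^ 2 := by
  intro s
  have key : ∀ a, ∑ s', p s a s' * (r s a + γ * V s' - V s) ^ 2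
      = (Adv s a) ^ 2 + γ ^ 2 * ∑ s', p s a s' * (B s a s') ^ 2 := by
    intro a
    have hBsum : ∑ s', p s a s' * B s a s' = 0 := by
      simp only [hB, mul_sub]
      rw [Finset.sum_sub_distrib, ← Finset.sum_mul, hp, one_mul, sub_self]
    have hdecomp : ∀ s', r s a + γ * V s' - V s = Adv s a + γ * B s a s' := by
      intro s'
      rw [hA, hB]; ring
    calc ∑ s', p s a s' * (r s a + γ * V s' - V s) ^ 2
        = ∑ s', (p s a s' * (Adv s a)^2 + (2 * γ * Adv s a) * (p s a s' * B s a s')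
            + γ^2 * (p s a s' * (B s a s')^2)) := by
          apply Finset.sum_congr rfl; intro s' _; rw [hdecomp]; ring
      _ = (∑ s', p s a s' * (Adv s a)^2)
            + (2 * γ * Adv s a) * (∑ s', p s a s' * B s a s')
            + γ^2 * ∑ s', p s a s' * (B s a s')^2 := by
          rw [Finset.sum_add_distrib, Finset.sum_add_distrib, Finset.mul_sum,
            Finset.mul_sum]
      _ = (Adv s a)^2 + γ^2 * ∑ s', p s a s' * (B s a s')^2 := by
          rw [hBsum, ← Finset.sum_mul, hp]; ring
  calc ∑ a, π s a * ∑ s', p s a s' * (r s a + γ * V s' - V s) ^ 2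
      = ∑ a, (π s a * (Adv s a)^2 + γ^2 * (π s a * ∑ s', p s a s' * (B s a s')^2)) := by
        apply Finset.sum_congr rfl; intro a _; rw [key]; ring
    _ = _ := by rw [Finset.sum_add_distrib, ← Finset.mul_sum]
end

section
/- In the four-state example MDP (states 1,2 lead deterministically to state 3 with reward 0; state 3 has actions u,d leading to terminal state 4 with rewards 1,0; γ=1), the DAE solution (when n_1, n_2 > 0) pools data across starting states: the DAE estimate of A(3,u) depends on all n_{1,u}+n_{2,u}+n_{1,d}+n_{2,d} trajectories, and satisfies the normal equations (n_{1,u}−n_{1,d})Â + n_1 V̂_1 = n_{1,u}, (n_{2,u}−n_{2,d})Â + n_2 V̂_2 = n_{2,u}, (n_{1,u}+n_{2,u})Â + n_{1,u} V̂_1 + n_{2,u} V̂_2 = n_{1,u}+n_{2,u}, where Â := Â(3,u) and the constraint gives Â(3,d) = −Â. -/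
lemma quad_coeff_zero (a b : ℝ) (h : ∀ t : ℝ, 0 ≤ a * t ^ 2 + b * t) : b = 0 := by
  have hd : (0:ℝ) < |a| + 1 := by positivity
  set c : ℝ := 1 / (|a| + 1) with hcdef
  have hc0 : 0 < c := by positivity
  have hc : c * (|a| + 1) = 1 := one_div_mul_cancel (ne_of_gt hd)
  have ha : a ≤ |a| := le_abs_self a
  have h0 := h (-(b * c))
  have key : 0 ≤ (|a| - a) * b ^ 2 * c ^ 2 :=
    mul_nonneg (mul_nonneg (sub_nonneg.2 ha) (sq_nonneg b)) (sq_nonneg c)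
  have hb2 : b ^ 2 ≤ 0 := by
    nlinarith [h0, key, hc, sq_nonneg (b * c), mul_pos hc0 hc0,
      mul_nonneg (sq_nonneg b) hc0.le]
  have := sq_nonneg b
  nlinarith

/-- In the four-state example MDP (γ = 1, uniform sampling policy, constraint
Â(3,d) = −Â(3,u)), any minimizer (Â, V̂₁, V̂₂) of the DAE loss
L = ∑_{i,a} n_{i,a} (r_a − Â(3,a) − V̂_i)² satisfies the stated normal equations,
which pool the data from all n_{1,u}+n_{1,d}+n_{2,u}+n_{2,d} trajectories. -/
theorem dae_four_state_normal_equations (n1u n1d n2u n2d : ℝ)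
    (h1u : 0 ≤ n1u) (h1d : 0 ≤ n1d) (h2u : 0 ≤ n2u) (h2d : 0 ≤ n2d)
    (hn1 : 0 < n1u + n1d) (hn2 : 0 < n2u + n2d)
    (Ahat V1 V2 : ℝ)
    (hmin : ∀ A' V1' V2' : ℝ,
      n1u * (1 - Ahat - V1) ^ 2 + n1d * (0 - (-Ahat) - V1) ^ 2
          + n2u * (1 - Ahat - V2) ^ 2 + n2d * (0 - (-Ahat) - V2) ^ 2
        ≤ n1u * (1 - A' - V1') ^ 2 + n1d * (0 - (-A') - V1') ^ 2
          + n2u * (1 - A' - V2') ^ 2 + n2d * (0 - (-A') - V2') ^ 2) :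
    (n1u - n1d) * Ahat + (n1u + n1d) * V1 = n1u ∧
    (n2u - n2d) * Ahat + (n2u + n2d) * V2 = n2u ∧
    (n1u + n2u) * Ahat + n1u * V1 + n2u * V2 = n1u + n2u := by
  have e1 : 2 * ((n1u - n1d) * Ahat + (n1u + n1d) * V1 - n1u) = 0 := by
    apply quad_coeff_zero (n1u + n1d)
    intro t
    have := hmin Ahat (V1 + t) V2
    nlinarith [this]
  have e2 : 2 * ((n2u - n2d) * Ahat + (n2u + n2d) * V2 - n2u) = 0 := by
    apply quad_coeff_zero (n2u + n2d)
    intro t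
    have := hmin Ahat V1 (V2 + t)
    nlinarith [this]
  have e3 : 2 * ((n1u + n1d + n2u + n2d) * Ahat + (n1u - n1d) * V1 + (n2u - n2d) * V2 - (n1u + n2u)) = 0 := by
    apply quad_coeff_zero (n1u + n1d + n2u + n2d)
    intro t
    have := hmin (Ahat + t) V1 V2
    nlinarith [this]
  refine ⟨by linarith, by linarith, by linarith⟩
end
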